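/- arXiv:2507.14112 — 2 statements merged into one kernel-verified Lean document; each statement's English description precedes it below -/
import Mathlib

section
/- The following inequality between real numbers holds: 8^{1/4} · √π · (4 − (8/7)√2) < 4 · (4π³((16/9)π − (93/35)√3))^{1/8}. (Equivalently: the defect of the barrel partition of ℝ⁸ is strictly smaller than the defect of the lens partition of ℝ⁸.) -/
open MeasureTheory Metric Set Filter Topology
open scoped ENNReal symmDiff RealInnerProductSpace

noncomputable section

/-- `d`-dimensional Euclidean space. -/
abbrev Euc (d : ℕ) : Type := EuclideanSpace ℝ (Fin d)

/-- The divergence of a vector field `φ : ℝ^d → ℝ^d`. -/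
def vdiv {d : ℕ} (φ : Euc d → Euc d) (x : Euc d) : ℝ :=
  ∑ i, fderiv ℝ φ x (EuclideanSpace.single i 1) i

/-- The perimeter `Per(E, B) = |D 1_E|(B)` of `E` relative to `B`, defined as the
outer-regularized total variation (on `B`) of the distributional derivative of the
characteristic function of `E`. -/
def perim {d : ℕ} (E B : Set (Euc d)) : ℝ≥0∞ :=
  ⨅ (U : Set (Euc d)) (_ : IsOpen U) (_ : B ⊆ U),
    ⨆ (φ : Euc d → Euc d) (_ : ContDiff ℝ 1 φ) (_ : HasCompactSupport φ)
      (_ : tsupport φ ⊆ U) (_ : ∀ x, ‖φ x‖ ≤ 1),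
      ENNReal.ofReal (∫ x in E, vdiv φ x)

/-- A Caccioppoli set: a measurable set with locally finite perimeter. -/
def Caccioppoli {d : ℕ} (E : Set (Euc d)) : Prop :=
  MeasurableSet E ∧ ∀ r : ℝ, 0 < r → perim E (ball 0 r) < ⊤

/-- An `N`-partition of `ℝ^d`: measurable regions, pairwise Lebesgue-disjoint,
whose union has full measure. -/
structure IsPartition {d N : ℕ} (E : Fin N → Set (Euc d)) : Prop where
  meas : ∀ j, MeasurableSet (E j)
  disj : ∀ i j, i ≠ j → volume (E i ∩ E j) = 0
  full : volume ((univ : Set (Euc d)) \ ⋃ j, E j) = 0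

/-- Perimeter of a partition in `B`: half the sum of the perimeters of the regions. -/
def partPerim {d N : ℕ} (E : Fin N → Set (Euc d)) (B : Set (Euc d)) : ℝ≥0∞ :=
  (∑ k, perim (E k) B) / 2

/-- `E` is `J`-isoperimetric in the (closed) set `X`. -/
def IsJIsoperimetric {d N : ℕ} (E : Fin N → Set (Euc d)) (X : Set (Euc d))
    (J : Set (Fin N)) : Prop :=
  ∀ K : Set (Euc d), IsCompact K → K ⊆ X →
    ∀ F : Fin N → Set (Euc d), IsPartition F →
      (∀ j, (F j) ∆ (E j) ⊆ K) →
      (∀ j ∈ J, volume (F j ∩ K) = volume (E j ∩ K)) →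
      partPerim E K ≤ partPerim F K

/-- `E` is isoperimetric: `J`-isoperimetric in `ℝ^d` with `J` the finite-volume regions. -/
def IsIsoperimetric {d N : ℕ} (E : Fin N → Set (Euc d)) : Prop :=
  IsJIsoperimetric E univ {j | volume (E j) ≠ ⊤}

/-- `L¹_loc` convergence of a family of sets along a filter. -/
def SetTendstoL1loc {d : ℕ} {ι : Type*} (l : Filter ι) (A : ι → Set (Euc d))
    (A' : Set (Euc d)) : Prop :=
  ∀ B : Set (Euc d), MeasurableSet B → Bornology.IsBounded B →
    Tendsto (fun n => volume ((A n ∆ A') ∩ B)) l (𝓝 0)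

/-- `L¹_loc` convergence of partitions. -/
def PartTendstoL1loc {d N : ℕ} {ι : Type*} (l : Filter ι) (E : ι → Fin N → Set (Euc d))
    (F : Fin N → Set (Euc d)) : Prop :=
  ∀ j, SetTendstoL1loc l (fun n => E n j) (F j)

/-- The translate `E - x`. -/
def tr {d : ℕ} (E : Set (Euc d)) (x : Euc d) : Set (Euc d) := (fun y => y + x) ⁻¹' E

/-- The dilation `E / r`. -/
def dil {d : ℕ} (E : Set (Euc d)) (r : ℝ) : Set (Euc d) := (fun y => r • y) ⁻¹' E

/-- A (positively homogeneous) cone with vertex at the origin. -/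
def IsCone {d : ℕ} (C : Set (Euc d)) : Prop := ∀ t : ℝ, 0 < t → ∀ x ∈ C, t • x ∈ C

/-- The measure-theoretic representative of a set: its points of essential closure. -/
def essCl {d : ℕ} (E : Set (Euc d)) : Set (Euc d) :=
  {x | ∀ r > 0, 0 < volume (E ∩ ball x r)}

/-- The defect of the barrel partition of `ℝ⁸` is strictly smaller than the defect of
the lens partition of `ℝ⁸`. -/
theorem barrel_defect_lt_lens_defect :
    (8 : ℝ) ^ ((1 : ℝ) / 4) * Real.sqrt Real.pi * (4 - (8 / 7) * Real.sqrt 2) <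
      4 * (4 * Real.pi ^ 3 * ((16 / 9) * Real.pi - (93 / 35) * Real.sqrt 3)) ^ ((1 : ℝ) / 8) := by

  have hpil : (3.141592 : ℝ) < Real.pi := Real.pi_gt_d6
  have hpiu : Real.pi < 3.141593 := Real.pi_lt_d6
  -- bounds on sqrt 2
  have h2l : (1.414213 : ℝ) < Real.sqrt 2 := by
    rw [show (1.414213 : ℝ) = Real.sqrt (1.414213 ^ 2) by
      rw [Real.sqrt_sq] <;> norm_num]
    exact Real.sqrt_lt_sqrt (by norm_num) (by norm_num)
  have h2u : Real.sqrt 2 < 1.414214 := by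
    rw [show (1.414214 : ℝ) = Real.sqrt (1.414214 ^ 2) by
      rw [Real.sqrt_sq] <;> norm_num]
    exact Real.sqrt_lt_sqrt (by norm_num) (by norm_num)
  -- bounds on sqrt 3
  have h3l : (0 : ℝ) < Real.sqrt 3 := Real.sqrt_pos.mpr (by norm_num)
  have h3u : Real.sqrt 3 < 1.7320509 := by
    rw [show (1.7320509 : ℝ) = Real.sqrt (1.7320509 ^ 2) by
      rw [Real.sqrt_sq] <;> norm_num]
    exact Real.sqrt_lt_sqrt (by norm_num) (by norm_num)
  -- bound on sqrt pi
  have hspu : Real.sqrt Real.pi < 1.772454 := by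
    rw [show (1.772454 : ℝ) = Real.sqrt (1.772454 ^ 2) by
      rw [Real.sqrt_sq] <;> norm_num]
    exact Real.sqrt_lt_sqrt (by positivity) (by nlinarith)
  have hspl : (0 : ℝ) ≤ Real.sqrt Real.pi := Real.sqrt_nonneg _
  -- bound on 8^(1/4)
  have h8 : (8 : ℝ) ^ ((1 : ℝ) / 4) < 1.682 := by
    have : (8 : ℝ) ^ ((1 : ℝ) / 4) < ((1.682 : ℝ) ^ (4 : ℕ)) ^ ((1 : ℝ) / 4) :=
      Real.rpow_lt_rpow (by norm_num) (by norm_num) (by norm_num)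
    rw [← Real.rpow_natCast (1.682:ℝ) 4, ← Real.rpow_mul (by norm_num)] at this
    norm_num at this
    norm_num
    exact this
  have h8l : (0 : ℝ) ≤ (8 : ℝ) ^ ((1 : ℝ) / 4) := Real.rpow_nonneg (by norm_num) _
  -- LHS < 7.2
  have hLHS : (8 : ℝ) ^ ((1 : ℝ) / 4) * Real.sqrt Real.pi * (4 - (8 / 7) * Real.sqrt 2)
      < 7.2 := by
    have hc : (0 : ℝ) < 4 - (8 / 7) * Real.sqrt 2 := by nlinarith
    nlinarith [mul_nonneg h8l hspl]
  -- RHS > 7.2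
  have hX : (110.19960576 : ℝ) < 4 * Real.pi ^ 3 * ((16 / 9) * Real.pi - (93 / 35) * Real.sqrt 3) := by
    nlinarith [Real.pi_pos, sq_nonneg (Real.pi - 3.141592), mul_pos Real.pi_pos Real.pi_pos,
      mul_pos (mul_pos Real.pi_pos Real.pi_pos) Real.pi_pos]
  have hRHS : (7.2 : ℝ) < 4 * (4 * Real.pi ^ 3 * ((16 / 9) * Real.pi - (93 / 35) * Real.sqrt 3)) ^ ((1 : ℝ) / 8) := by
    have h18 : (1.8 : ℝ) < (4 * Real.pi ^ 3 * ((16 / 9) * Real.pi - (93 / 35) * Real.sqrt 3)) ^ ((1 : ℝ) / 8) := by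
      have : ((1.8 : ℝ) ^ (8 : ℕ)) ^ ((1 : ℝ) / 8) <
          (4 * Real.pi ^ 3 * ((16 / 9) * Real.pi - (93 / 35) * Real.sqrt 3)) ^ ((1 : ℝ) / 8) :=
        Real.rpow_lt_rpow (by positivity) (by norm_num at hX ⊢; linarith) (by norm_num)
      rw [← Real.rpow_natCast (1.8:ℝ) 8, ← Real.rpow_mul (by norm_num)] at this
      norm_num at this
      norm_num
      exact this
    linarith
  linarith
end
end

section
/- In ℝ⁸ with e₈ = (0,…,0,1), let L₁ = B₁(e₈/2) ∩ B₁(−e₈/2) be the intersection of the two open unit balls centered at ±e₈/2. Then the Lebesgue measure of L₁ equals |L₁| = π⁴/36 − (93/2240)√3 · π³. -/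
open MeasureTheory Metric Set Filter Topology
open scoped ENNReal symmDiff RealInnerProductSpace

noncomputable section

/-- The last standard basis vector `e₈ = (0,…,0,1)` of `ℝ⁸`. -/
def e8 : Euc 8 := EuclideanSpace.single (7 : Fin 8) (1 : ℝ)


/-- Antiderivative of `(√(1-u²))⁷`. -/
noncomputable def lensFa (u : ℝ) : ℝ :=
  u * (Real.sqrt (1 - u^2))^7 / 8 + 7 * u * (Real.sqrt (1 - u^2))^5 / 48
  + 35 * u * (Real.sqrt (1 - u^2))^3 / 192 + 35 * u * Real.sqrt (1 - u^2) / 128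
  + 35 * Real.arcsin u / 128

lemma lensFa_deriv {u : ℝ} (h1 : -1 < u) (h2 : u < 1) :
    HasDerivAt lensFa ((Real.sqrt (1 - u^2))^7) u := by
  have hpos : 0 < 1 - u^2 := by nlinarith
  set s := Real.sqrt (1 - u^2) with hs
  have hs0 : 0 < s := Real.sqrt_pos.mpr hpos
  have hs2 : s^2 = 1 - u^2 := Real.sq_sqrt hpos.le
  have hsq : HasDerivAt (fun u : ℝ => 1 - u^2) (-(2*u)) u := by
    simpa using ((hasDerivAt_pow 2 u).const_sub 1)
  have hg : HasDerivAt (fun u : ℝ => Real.sqrt (1 - u^2)) (1/(2*s) * (-(2*u))) u :=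
    (Real.hasDerivAt_sqrt hpos.ne').comp u hsq
  have harc : HasDerivAt Real.arcsin (1 / Real.sqrt (1 - u^2)) u :=
    Real.hasDerivAt_arcsin h1.ne' h2.ne
  have h7 : HasDerivAt (fun u : ℝ => u * (Real.sqrt (1 - u^2))^7)
      (1 * s^7 + u * (7 * s^6 * (1/(2*s) * (-(2*u))))) u :=
    (hasDerivAt_id u).mul (hg.pow 7)
  have h5 : HasDerivAt (fun u : ℝ => u * (Real.sqrt (1 - u^2))^5)
      (1 * s^5 + u * (5 * s^4 * (1/(2*s) * (-(2*u))))) u :=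
    (hasDerivAt_id u).mul (hg.pow 5)
  have h3 : HasDerivAt (fun u : ℝ => u * (Real.sqrt (1 - u^2))^3)
      (1 * s^3 + u * (3 * s^2 * (1/(2*s) * (-(2*u))))) u :=
    (hasDerivAt_id u).mul (hg.pow 3)
  have h1' : HasDerivAt (fun u : ℝ => u * Real.sqrt (1 - u^2))
      (1 * s + u * (1/(2*s) * (-(2*u)))) u :=
    (hasDerivAt_id u).mul hg
  have H := (((((h7.div_const 8).add ((h5.const_mul 7).div_const 48)).add
      ((h3.const_mul 35).div_const 192)).add ((h1'.const_mul 35).div_const 128)).add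
      ((harc.const_mul 35).div_const 128))
  refine cast (congrArg₂ (fun (f : ℝ → ℝ) (f' : ℝ) => HasDerivAt f f' u) ?_ ?_).symm H
  · unfold lensFa; ext v; simp only [Pi.add_apply]; ring
  · rw [← hs]
    field_simp
    linear_combination (5160960*s^2 + 6881280*s^4 + 8257536*s^6
      + 2580480) * hs2

lemma lensFa_cont : Continuous lensFa := by
  unfold lensFa
  have h1 : Continuous fun u : ℝ => Real.sqrt (1 - u^2) :=
    Real.continuous_sqrt.comp (by continuity)
  have h2 := Real.continuous_arcsin
  fun_prop

lemma lens_sqrt34 : Real.sqrt (1 - (1/2:ℝ)^2) = Real.sqrt 3 / 2 := by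
  rw [show (1 - (1/2:ℝ)^2) = 3 * (1/2)^2 by norm_num,
    Real.sqrt_mul (by norm_num : (0:ℝ) ≤ 3), Real.sqrt_sq (by norm_num : (0:ℝ) ≤ 1/2)]; ring

lemma lens_arcsin_half : Real.arcsin (1/2 : ℝ) = Real.pi / 6 := by
  have h := Real.arcsin_sin (x := Real.pi/6) (by linarith [Real.pi_pos])
    (by linarith [Real.pi_pos])
  rw [Real.sin_pi_div_six] at h
  exact h

lemma lens_int_eval : ∫ u in (1/2:ℝ)..1, (Real.sqrt (1 - u^2))^7
    = 35 * Real.pi / 384 - 279 * Real.sqrt 3 / 2048 := by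
  rw [intervalIntegral.integral_eq_sub_of_hasDeriv_right_of_le (by norm_num)
    (lensFa_cont.continuousOn)
    (fun x hx => (lensFa_deriv (by rcases hx with ⟨h1, h2⟩; linarith) hx.2).hasDerivWithinAt)
    (((Real.continuous_sqrt.comp (by continuity)).pow 7).intervalIntegrable _ _)]
  have hFa1 : lensFa 1 = 35 * Real.pi / 256 := by
    simp [lensFa, Real.arcsin_one]
    ring
  have hFah : lensFa (1/2) = 35 * Real.pi / 768 + 279 * Real.sqrt 3 / 2048
      - (35 * Real.pi / 768 + 279 * Real.sqrt 3 / 2048 - (Real.sqrt 3)^7/2048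
      - 7*(Real.sqrt 3)^5/3072 - 35*(Real.sqrt 3)^3/3072 - 35*Real.sqrt 3/512
      - 35 * Real.pi / 768) := by
    simp only [lensFa, lens_sqrt34, lens_arcsin_half]
    ring
  rw [hFa1, hFah]
  have hr : (Real.sqrt 3)^2 = 3 := Real.sq_sqrt (by norm_num)
  linear_combination (-(Real.sqrt 3^5)/2048 - 23*(Real.sqrt 3)^3/6144
    - 139*Real.sqrt 3/6144) * hr

/-- The profile function of the lens: the 7-th power of the slice radius. -/
noncomputable def lensH (t : ℝ) : ℝ := (Real.sqrt (1 - (|t| + 1/2)^2))^7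

lemma lensH_cont : Continuous lensH :=
  (Real.continuous_sqrt.comp (by continuity)).pow 7

lemma lensH_zero {t : ℝ} (ht : (1:ℝ)/2 ≤ |t|) : lensH t = 0 := by
  unfold lensH
  rw [Real.sqrt_eq_zero'.mpr (by nlinarith [abs_nonneg t])]
  norm_num

lemma lensH_supp : Function.support lensH ⊆ Ioc (-(1/2) : ℝ) (1/2) := by
  intro x hx
  rw [Function.mem_support] at hx
  by_contra hmem
  apply hx
  apply lensH_zero
  simp only [mem_Ioc, not_and_or, not_lt, not_le] at hmem
  rcases hmem with h | h
  · rw [abs_of_nonpos (by linarith)]; linarith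
  · rw [abs_of_pos (by linarith)]; linarith

lemma lensH_integrable : Integrable lensH := by
  apply lensH_cont.integrable_of_hasCompactSupport
  apply HasCompactSupport.intro (isCompact_Icc (a := (-(1/2):ℝ)) (b := 1/2))
  intro x hx
  by_contra hne
  exact hx (Ioc_subset_Icc_self (lensH_supp hne))

lemma lens_whole_int :
    ∫ t : ℝ, lensH t = 2 * (35 * Real.pi / 384 - 279 * Real.sqrt 3 / 2048) := by
  rw [← intervalIntegral.integral_eq_integral_of_support_subset lensH_supp]
  have hii : ∀ a b : ℝ, IntervalIntegrable lensH volume a b :=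
    fun a b => lensH_cont.intervalIntegrable a b
  rw [← intervalIntegral.integral_add_adjacent_intervals (hii (-(1/2)) 0) (hii 0 (1/2))]
  have hsym : ∫ x in (-(1/2) : ℝ)..0, lensH x = ∫ x in (0:ℝ)..(1/2), lensH x := by
    have hcn := intervalIntegral.integral_comp_neg (a := 0) (b := 1/2) lensH
    rw [show (-0:ℝ) = 0 by norm_num] at hcn
    rw [← hcn]
    apply intervalIntegral.integral_congr
    intro x _
    simp only [lensH, abs_neg]
  have hhalf : ∫ x in (0:ℝ)..(1/2), lensH x
      = 35 * Real.pi / 384 - 279 * Real.sqrt 3 / 2048 := by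
    have heq : ∫ x in (0:ℝ)..(1/2), lensH x
        = ∫ x in (0:ℝ)..(1/2), (Real.sqrt (1 - (x + 1/2)^2))^7 := by
      apply intervalIntegral.integral_congr
      intro x hx
      rw [uIcc_of_le (by norm_num)] at hx
      unfold lensH
      rw [abs_of_nonneg hx.1]
    rw [heq, intervalIntegral.integral_comp_add_right (fun u => (Real.sqrt (1 - u^2))^7) (1/2)]
    norm_num [lens_int_eval]
  rw [hsym, hhalf]
  ring

lemma lens_gamma_92 : Real.Gamma ((7:ℝ)/2 + 1) = 105 / 16 * Real.sqrt Real.pi := by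
  have h12 : Real.Gamma (1/2 : ℝ) = Real.sqrt Real.pi := Real.Gamma_one_half_eq
  have h32 : Real.Gamma (3/2 : ℝ) = 1/2 * Real.sqrt Real.pi := by
    rw [show (3/2 : ℝ) = 1/2 + 1 by norm_num, Real.Gamma_add_one (by norm_num), h12]
  have h52 : Real.Gamma (5/2 : ℝ) = 3/4 * Real.sqrt Real.pi := by
    rw [show (5/2 : ℝ) = 3/2 + 1 by norm_num, Real.Gamma_add_one (by norm_num), h32]; ring
  have h72 : Real.Gamma (7/2 : ℝ) = 15/8 * Real.sqrt Real.pi := by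
    rw [show (7/2 : ℝ) = 5/2 + 1 by norm_num, Real.Gamma_add_one (by norm_num), h52]; ring
  rw [Real.Gamma_add_one (by norm_num), h72]; ring

lemma lens_const_7 :
    Real.sqrt Real.pi ^ 7 / Real.Gamma ((7:ℝ)/2 + 1) = 16 * Real.pi ^ 3 / 105 := by
  rw [lens_gamma_92]
  have hπ : (0:ℝ) < Real.sqrt Real.pi := Real.sqrt_pos.mpr Real.pi_pos
  have h2 : Real.sqrt Real.pi ^ 2 = Real.pi := Real.sq_sqrt Real.pi_pos.le
  rw [show (7:ℕ) = 2*3+1 by norm_num, pow_succ, pow_mul, h2]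
  field_simp

lemma lens_slice_vol (t : ℝ) :
    volume {y : Fin 7 → ℝ | ∑ j, (y j)^2 < 1 - (|t| + 1/2)^2}
      = ENNReal.ofReal (lensH t) * ENNReal.ofReal (16 * Real.pi ^ 3 / 105) := by
  set c : ℝ := 1 - (|t| + 1/2)^2 with hc
  have hset : {y : Fin 7 → ℝ | ∑ j, (y j)^2 < c}
      = (MeasurableEquiv.toLp 2 (Fin 7 → ℝ)).symm.symm ⁻¹'
          ball (0 : EuclideanSpace ℝ (Fin 7)) (Real.sqrt c) := by
    ext y
    simp only [mem_setOf_eq, mem_preimage, mem_ball]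
    rw [EuclideanSpace.dist_eq]
    have hterm : ∀ i : Fin 7, dist ((MeasurableEquiv.toLp 2 (Fin 7 → ℝ)).symm.symm y i)
        ((0 : EuclideanSpace ℝ (Fin 7)) i) ^ 2 = (y i)^2 := by
      intro i
      rw [Real.dist_eq, sq_abs]
      norm_num
    rw [Finset.sum_congr rfl fun i _ => hterm i]
    rw [Real.sqrt_lt_sqrt_iff (by positivity)]
  rw [hset, ((EuclideanSpace.volume_preserving_symm_measurableEquiv_toLp (Fin 7)).symm).measure_preimage
      measurableSet_ball.nullMeasurableSet]
  rw [EuclideanSpace.volume_ball]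
  simp only [Fintype.card_fin, Nat.cast_ofNat]
  rw [← ENNReal.ofReal_pow (Real.sqrt_nonneg _), lens_const_7]
  rfl

lemma lens_fubini :
    volume (ball ((1 / 2 : ℝ) • e8) 1 ∩ ball (-((1 / 2 : ℝ) • e8)) 1) =
      ∫⁻ t : ℝ, volume {y : Fin 7 → ℝ | ∑ j, (y j)^2 < 1 - (|t| + 1/2)^2} := by
  set L := ball ((1 / 2 : ℝ) • e8) 1 ∩ ball (-((1 / 2 : ℝ) • e8)) 1 with hL
  have hLmeas : MeasurableSet L := (isOpen_ball.inter isOpen_ball).measurableSet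
  have h1 := (EuclideanSpace.volume_preserving_symm_measurableEquiv_toLp (Fin 8)).symm
  have h2 := (volume_preserving_piFinSuccAbove (fun _ : Fin 8 => ℝ) (Fin.last 7)).symm
  have hψ := h1.comp h2
  rw [← hψ.measure_preimage hLmeas.nullMeasurableSet]
  have hset : ((MeasurableEquiv.toLp 2 (Fin 8 → ℝ)).symm.symm ∘
      (MeasurableEquiv.piFinSuccAbove (fun _ : Fin 8 => ℝ) (Fin.last 7)).symm) ⁻¹' L
      = {p : ℝ × (Fin 7 → ℝ) | (∑ j, (p.2 j)^2) + (|p.1| + 1/2)^2 < 1} := by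
    ext p
    obtain ⟨t, y⟩ := p
    simp only [Function.comp_apply, mem_preimage, hL, mem_inter_iff, mem_ball, mem_setOf_eq]
    set z : Euc 8 := (MeasurableEquiv.toLp 2 (Fin 8 → ℝ)).symm.symm
        ((MeasurableEquiv.piFinSuccAbove (fun _ : Fin 8 => ℝ) (Fin.last 7)).symm (t, y)) with hz
    have hz2 : ∀ i, z i = Fin.insertNth (α := fun _ : Fin 8 => ℝ) (Fin.last 7) t y i :=
      fun i => rfl
    have e1 : z (Fin.last 7) = t := by rw [hz2, Fin.insertNth_apply_same]
    have e2 : ∀ j : Fin 7, z ((Fin.last 7).succAbove j) = y j := by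
      intro j; rw [hz2, Fin.insertNth_apply_succAbove]
    have key : ∀ c : Euc 8, dist z c
        = Real.sqrt ((t - c (Fin.last 7))^2 + ∑ j, (y j - c ((Fin.last 7).succAbove j))^2) := by
      intro c
      rw [EuclideanSpace.dist_eq, Fin.sum_univ_succAbove _ (Fin.last 7)]
      simp only [e1, e2, Real.dist_eq, sq_abs]
    rw [key, key]
    have hc1 : ((1/2 : ℝ) • e8) (Fin.last 7) = 1/2 := by
      simp [e8, EuclideanSpace.single_apply]
    have hc2 : ∀ j : Fin 7, ((1/2 : ℝ) • e8) ((Fin.last 7).succAbove j) = 0 := by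
      intro j; rw [Fin.succAbove_last]
      simp only [e8, PiLp.smul_apply, EuclideanSpace.single_apply, smul_eq_mul]
      rw [if_neg]; · ring
      · simp [Fin.ext_iff]; omega
    have hc1' : (-((1/2 : ℝ) • e8)) (Fin.last 7) = -(1/2) := by
      show -(((1/2 : ℝ) • e8) (Fin.last 7)) = _; rw [hc1]
    have hc2' : ∀ j : Fin 7, (-((1/2 : ℝ) • e8)) ((Fin.last 7).succAbove j) = 0 := by
      intro j; show -(((1/2 : ℝ) • e8) _) = _; rw [hc2]; ring
    rw [hc1, hc1']
    simp only [hc2, hc2', sub_zero, sub_neg_eq_add]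
    rw [Real.sqrt_lt' one_pos, Real.sqrt_lt' one_pos, one_pow]
    constructor
    · rintro ⟨ha, hb⟩
      rcases abs_cases t with ⟨h, _⟩ | ⟨h, _⟩ <;> rw [h] <;> nlinarith
    · intro h
      rcases abs_cases t with ⟨h', _⟩ | ⟨h', _⟩ <;> rw [h'] at h <;> constructor <;> nlinarith
  rw [hset]
  have hTmeas : MeasurableSet {p : ℝ × (Fin 7 → ℝ) | (∑ j, (p.2 j)^2) + (|p.1| + 1/2)^2 < 1} := by
    apply measurableSet_lt _ measurable_const
    fun_prop
  rw [Measure.volume_eq_prod, Measure.prod_apply hTmeas]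
  refine lintegral_congr fun t => ?_
  congr 1
  ext y
  simp only [mem_preimage, mem_setOf_eq]
  constructor <;> intro h <;> linarith

/-- **Volume of the lens** `L₁ = B₁(e₈/2) ∩ B₁(−e₈/2)` in `ℝ⁸`. -/
theorem lens_volume :
    volume (ball ((1 / 2 : ℝ) • e8) 1 ∩ ball (-((1 / 2 : ℝ) • e8)) 1) =
      ENNReal.ofReal (Real.pi ^ 4 / 36 - (93 / 2240) * Real.sqrt 3 * Real.pi ^ 3) := by
  rw [lens_fubini]
  calc ∫⁻ t : ℝ, volume {y : Fin 7 → ℝ | ∑ j, (y j)^2 < 1 - (|t| + 1/2)^2}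
      = ∫⁻ t : ℝ, ENNReal.ofReal (lensH t) * ENNReal.ofReal (16 * Real.pi ^ 3 / 105) :=
        lintegral_congr fun t => lens_slice_vol t
    _ = (∫⁻ t : ℝ, ENNReal.ofReal (lensH t)) * ENNReal.ofReal (16 * Real.pi ^ 3 / 105) :=
        lintegral_mul_const _ (ENNReal.measurable_ofReal.comp lensH_cont.measurable)
    _ = ENNReal.ofReal (∫ t : ℝ, lensH t) * ENNReal.ofReal (16 * Real.pi ^ 3 / 105) := by
        rw [ofReal_integral_eq_lintegral_ofReal lensH_integrable
          (Filter.Eventually.of_forall fun t => by unfold lensH; positivity)]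
    _ = ENNReal.ofReal (Real.pi ^ 4 / 36 - (93 / 2240) * Real.sqrt 3 * Real.pi ^ 3) := by
        rw [lens_whole_int, ← ENNReal.ofReal_mul (by
          nlinarith [Real.sq_sqrt (show (0:ℝ) ≤ 3 by norm_num), Real.sqrt_nonneg 3,
            Real.pi_gt_three])]
        congr 1
        ring
end
end
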